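/- (Tightness of the SDR.) If the SDR problem is strictly feasible, then every optimal solution (V*₁, …, V*_K, Q*) of the SDR problem satisfies rank(V*_k) = 1 for all k = 1, …, K. -/

import Mathlib

open BigOperators Matrix ComplexOrder

noncomputable section

/-- The matrix `B_m(V, Q)` appearing in the fronthaul-rate constraint of the SDR. -/
def Bmat {M K : ℕ} (Cbar : Fin M → ℝ)
    (V : Fin K → Matrix (Fin M) (Fin M) ℂ) (Q : Matrix (Fin M) (Fin M) ℂ)
    (m : Fin M) : Matrix (Fin M) (Fin M) ℂ :=
  fun s t =>
    if s = m ∧ t = m then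
      Q m m - (((2 : ℝ) ^ (-(Cbar m)) : ℝ) : ℂ) * ((∑ k, V k m m) + Q m m)
    else if m ≤ s ∧ m ≤ t then Q s t
    else 0

/-- Feasibility for the SDR problem. -/
def SDRFeasible {M K : ℕ} (hvec : Fin K → Fin M → ℂ) (σ γbar : Fin K → ℝ)
    (Cbar Pbar : Fin M → ℝ)
    (V : Fin K → Matrix (Fin M) (Fin M) ℂ) (Q : Matrix (Fin M) (Fin M) ℂ) : Prop :=
  (∀ k, (V k).PosSemidef) ∧ Q.PosSemidef ∧
  (∀ k, σ k ^ 2 ≤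
    (star (hvec k) ⬝ᵥ
      ((((1 + 1 / γbar k : ℝ) : ℂ) • V k - (∑ j, V j) - Q) *ᵥ hvec k)).re) ∧
  (∀ m, (Bmat Cbar V Q m).PosSemidef) ∧
  (∀ m, (∑ k, V k m m).re + (Q m m).re ≤ Pbar m)

/-- Objective value of the SDR problem: `∑ₖ tr(Vₖ) + tr(Q)` (a real number). -/
def SDRObj {M K : ℕ} (V : Fin K → Matrix (Fin M) (Fin M) ℂ)
    (Q : Matrix (Fin M) (Fin M) ℂ) : ℝ :=
  (∑ k, (V k).trace).re + Q.trace.re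

/-- Strict feasibility of the SDR problem. -/
def SDRStrictFeasible {M K : ℕ} (hvec : Fin K → Fin M → ℂ) (σ γbar : Fin K → ℝ)
    (Cbar Pbar : Fin M → ℝ) : Prop :=
  ∃ (V : Fin K → Matrix (Fin M) (Fin M) ℂ) (Q : Matrix (Fin M) (Fin M) ℂ),
    SDRFeasible hvec σ γbar Cbar Pbar V Q ∧
    (∀ k, (V k).PosDef) ∧ Q.PosDef ∧
    (∀ k, σ k ^ 2 <
      (star (hvec k) ⬝ᵥ
        ((((1 + 1 / γbar k : ℝ) : ℂ) • V k - (∑ j, V j) - Q) *ᵥ hvec k)).re) ∧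
    (∀ m, (∑ k, V k m m).re + (Q m m).re < Pbar m) ∧
    (∀ m : Fin M,
      (((Bmat Cbar V Q m).submatrix
        (fun i : {s : Fin M // m ≤ s} => (i : Fin M))
        (fun i : {s : Fin M // m ≤ s} => (i : Fin M))).PosDef))

section Helpers

variable {n : Type*} [Fintype n] [DecidableEq n]

lemma vecMulVec_mulVec' (v w x : n → ℂ) :
    (vecMulVec v w) *ᵥ x = (w ⬝ᵥ x) • v := by
  funext i
  simp [vecMulVec_apply, mulVec, dotProduct, Finset.mul_sum, mul_assoc, mul_comm, mul_left_comm]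

lemma dot_vecMulVec (v w x y : n → ℂ) :
    x ⬝ᵥ (vecMulVec v w) *ᵥ y = (x ⬝ᵥ v) * (w ⬝ᵥ y) := by
  rw [vecMulVec_mulVec', dotProduct_smul, smul_eq_mul]
  ring

lemma inner_eq_dot (u w : n → ℂ) :
    (inner ℂ (WithLp.toLp 2 u : EuclideanSpace ℂ n) (WithLp.toLp 2 w) : ℂ) = star u ⬝ᵥ w := by
  simp [PiLp.inner_apply, dotProduct, RCLike.inner_apply, mul_comm]

lemma cs_dot (u w : n → ℂ) :
    Complex.normSq (star u ⬝ᵥ w) ≤ (star u ⬝ᵥ u).re * (star w ⬝ᵥ w).re := by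
  let u' : EuclideanSpace ℂ n := WithLp.toLp 2 u
  let w' : EuclideanSpace ℂ n := WithLp.toLp 2 w
  have h2 : (star u ⬝ᵥ u).re = ‖u'‖ ^ 2 := by
    rw [← inner_self_eq_norm_sq (𝕜 := ℂ) u']
    rw [show (inner ℂ u' u' : ℂ) = star u ⬝ᵥ u from inner_eq_dot u u]
    rfl
  have h3 : (star w ⬝ᵥ w).re = ‖w'‖ ^ 2 := by
    rw [← inner_self_eq_norm_sq (𝕜 := ℂ) w']
    rw [show (inner ℂ w' w' : ℂ) = star w ⬝ᵥ w from inner_eq_dot w w]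
    rfl
  have h4 : ‖star u ⬝ᵥ w‖ ≤ ‖u'‖ * ‖w'‖ := by
    rw [← inner_eq_dot u w]
    exact norm_inner_le_norm u' w'
  have h5 := mul_self_le_mul_self (norm_nonneg _) h4
  rw [h2, h3]
  calc Complex.normSq (star u ⬝ᵥ w) = ‖star u ⬝ᵥ w‖ * ‖star u ⬝ᵥ w‖ := by
        rw [Complex.normSq_eq_norm_sq, sq]
    _ ≤ (‖u'‖ * ‖w'‖) * (‖u'‖ * ‖w'‖) := h5
    _ = ‖u'‖ ^ 2 * ‖w'‖ ^ 2 := by ring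

lemma star_single_one (i : n) : star (Pi.single i (1:ℂ)) = (Pi.single i 1 : n → ℂ) := by
  funext j
  rcases eq_or_ne j i with h | h <;> simp [Pi.single_apply, h]

lemma dot_single_diag (A : Matrix n n ℂ) (i : n) :
    star (Pi.single i (1:ℂ)) ⬝ᵥ A *ᵥ Pi.single i 1 = A i i := by
  rw [star_single_one, mulVec_single, single_dotProduct]
  simp

lemma psd_diag_nonneg {A : Matrix n n ℂ} (hA : A.PosSemidef) (i : n) :
    0 ≤ A i i := by
  have := hA.dotProduct_mulVec_nonneg (Pi.single i 1)
  rwa [dot_single_diag] at this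

open scoped MatrixOrder in
lemma posSemidef_eq_conjTranspose_mul_self' {A : Matrix n n ℂ} (hA : A.PosSemidef) :
    ∃ B : Matrix n n ℂ, A = Bᴴ * B := by
  obtain ⟨B, hB⟩ := CStarAlgebra.nonneg_iff_eq_star_mul_self.mp hA.nonneg
  exact ⟨B, by rw [hB, star_eq_conjTranspose]⟩

lemma psd_trace_eq_zero {A : Matrix n n ℂ} (hA : A.PosSemidef)
    (ht : A.trace = 0) : A = 0 := by
  obtain ⟨B, rfl⟩ := posSemidef_eq_conjTranspose_mul_self' hA
  have key : ∑ j, ∑ i, Complex.normSq (B i j) = 0 := by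
    have h1 := congrArg Complex.re ht
    rw [trace] at h1
    simpa [diag, mul_apply, conjTranspose_apply, Complex.normSq_eq_conj_mul_self, Complex.normSq_apply] using h1
  have hB : B = 0 := by
    ext i j
    have h2 : ∀ j' ∈ Finset.univ, (0:ℝ) ≤ ∑ i, Complex.normSq (B i j') := fun j' _ =>
      Finset.sum_nonneg fun i _ => Complex.normSq_nonneg _
    have h3 := (Finset.sum_eq_zero_iff_of_nonneg h2).mp key j (Finset.mem_univ _)
    have h4 := (Finset.sum_eq_zero_iff_of_nonneg
      (fun i _ => Complex.normSq_nonneg (B i j))).mp h3 i (Finset.mem_univ _)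
    simpa using Complex.normSq_eq_zero.mp h4
  rw [hB]
  simp

lemma complex_nonneg_iff {z : ℂ} : 0 ≤ z ↔ 0 ≤ z.re ∧ z.im = 0 := by
  rw [Complex.le_def]
  simp [eq_comm]

lemma sum_mulVec' {ι : Type*} (s : Finset ι) (f : ι → Matrix n n ℂ) (x : n → ℂ) :
    (∑ i ∈ s, f i) *ᵥ x = ∑ i ∈ s, f i *ᵥ x := by
  funext j
  simp [mulVec, dotProduct, Matrix.sum_apply, Finset.sum_mul, Finset.sum_apply]
  rw [Finset.sum_comm]

lemma dotProduct_sum' {ι : Type*} (s : Finset ι) (u : n → ℂ) (w : ι → n → ℂ) :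
    u ⬝ᵥ (∑ i ∈ s, w i) = ∑ i ∈ s, u ⬝ᵥ w i := by
  simp [dotProduct, Finset.mul_sum, Finset.sum_apply]
  rw [Finset.sum_comm]

end Helpers


section Helpers2

variable {n : Type*} [Fintype n] [DecidableEq n]

lemma psd_smul_vecMulVec (c : ℝ) (hc : 0 ≤ c) (u : n → ℂ) :
    (((c : ℝ) : ℂ) • vecMulVec u (star u)).PosSemidef := by
  refine PosSemidef.of_dotProduct_mulVec_nonneg ?_ ?_
  · show _ᴴ = _
    rw [conjTranspose_smul]
    congr 1
    · simp [Complex.star_def, Complex.conj_ofReal]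
    · ext i j
      simp [conjTranspose_apply, vecMulVec_apply, mul_comm]
  · intro x
    rw [smul_mulVec, dotProduct_smul, smul_eq_mul, dot_vecMulVec,
      star_dotProduct u x, Complex.star_def, Complex.mul_conj]
    rw [show ((c:ℂ) * ((Complex.normSq (star x ⬝ᵥ u) : ℝ) : ℂ))
        = (((c * Complex.normSq (star x ⬝ᵥ u) : ℝ)) : ℂ) by push_cast; ring]
    rw [complex_nonneg_iff]
    constructor
    · simp only [Complex.ofReal_re]
      exact mul_nonneg hc (Complex.normSq_nonneg _)
    · simp

lemma dot_factor (B : Matrix n n ℂ) (x y : n → ℂ) :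
    star x ⬝ᵥ (Bᴴ * B) *ᵥ y = star (B *ᵥ x) ⬝ᵥ (B *ᵥ y) := by
  rw [← mulVec_mulVec, dotProduct_mulVec, ← star_mulVec]

end Helpers2

/-- tightness of the SDR: if the SDR problem is strictly feasible, then
every optimal solution `(V*, Q*)` satisfies `rank(V*ₖ) = 1` for all `k`. -/
theorem stmt14 {M K : ℕ} (hM : 0 < M) (hK : 0 < K)
    (hvec : Fin K → Fin M → ℂ) (σ γbar : Fin K → ℝ) (Cbar Pbar : Fin M → ℝ)
    (hσ : ∀ k, 0 < σ k) (hγ : ∀ k, 0 < γbar k)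
    (hC : ∀ m, 0 < Cbar m) (hP : ∀ m, 0 < Pbar m)
    (hstrict : SDRStrictFeasible hvec σ γbar Cbar Pbar)
    (Vstar : Fin K → Matrix (Fin M) (Fin M) ℂ) (Qstar : Matrix (Fin M) (Fin M) ℂ)
    (hfeas : SDRFeasible hvec σ γbar Cbar Pbar Vstar Qstar)
    (hopt : ∀ (V : Fin K → Matrix (Fin M) (Fin M) ℂ) (Q : Matrix (Fin M) (Fin M) ℂ),
      SDRFeasible hvec σ γbar Cbar Pbar V Q → SDRObj Vstar Qstar ≤ SDRObj V Q) :
    ∀ k, (Vstar k).rank = 1 := by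
  classical
  intro k
  obtain ⟨hVpsd, hQpsd, hSINR, hBm, hPow⟩ := hfeas
  have hdotpsd : ∀ (X : Matrix (Fin M) (Fin M) ℂ), X.PosSemidef →
      ∀ x, 0 ≤ (star x ⬝ᵥ X *ᵥ x).re ∧ (star x ⬝ᵥ X *ᵥ x).im = 0 := by
    intro X hX x
    exact complex_nonneg_iff.mp (hX.dotProduct_mulVec_nonneg x)
  set A : Matrix (Fin M) (Fin M) ℂ := Vstar k with hAdef
  set h : Fin M → ℂ := hvec k with hhdef
  set v : Fin M → ℂ := A *ᵥ h with hvdef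
  set α : ℂ := star h ⬝ᵥ v with hαdef
  have hα0 : 0 ≤ α := (hVpsd k).dotProduct_mulVec_nonneg h
  have hαre : 0 ≤ α.re := (complex_nonneg_iff.mp hα0).1
  have hαim : α.im = 0 := (complex_nonneg_iff.mp hα0).2
  -- positivity of α
  have hαpos : 0 < α.re := by
    have hs := hSINR k
    have hexp : ((((1 + 1 / γbar k : ℝ) : ℂ)) • A - (∑ j, Vstar j) - Qstar) *ᵥ h
        = (((1 + 1 / γbar k : ℝ) : ℂ)) • (A *ᵥ h) - (∑ j, Vstar j *ᵥ h) - Qstar *ᵥ h := by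
      rw [sub_mulVec, sub_mulVec, smul_mulVec, sum_mulVec']
    have hre : (star h ⬝ᵥ (((((1 + 1 / γbar k : ℝ) : ℂ)) • A - (∑ j, Vstar j) - Qstar) *ᵥ h)).re
        = (1 + 1 / γbar k) * α.re - (∑ j, (star h ⬝ᵥ Vstar j *ᵥ h).re)
          - (star h ⬝ᵥ Qstar *ᵥ h).re := by
      rw [hexp, dotProduct_sub, dotProduct_sub, dotProduct_smul, dotProduct_sum']
      simp [smul_eq_mul, Complex.sub_re, Complex.re_ofReal_mul, Complex.re_sum, hαdef, hvdef]
    rw [hre] at hs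
    have hsum_ge : α.re ≤ ∑ j, (star h ⬝ᵥ Vstar j *ᵥ h).re :=
      Finset.single_le_sum (f := fun j => (star h ⬝ᵥ Vstar j *ᵥ h).re)
        (fun j _ => (hdotpsd _ (hVpsd j) h).1) (Finset.mem_univ k)
    have hq := (hdotpsd _ hQpsd h).1
    have hσ2 : 0 < σ k ^ 2 := pow_pos (hσ k) 2
    rcases lt_or_eq_of_le hαre with hpos | heq
    · exact hpos
    · exfalso
      rw [← heq] at hs hsum_ge
      rw [mul_zero] at hs
      linarith
  set r : ℝ := α.re with hrdef
  have hrpos : 0 < r := hαpos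
  have hαr : α = (r : ℂ) := by
    apply Complex.ext
    · simp [hrdef]
    · simp [hαim]
  have hα_ne : α ≠ 0 := by
    rw [hαr]
    exact_mod_cast hrpos.ne'
  have hv_ne : v ≠ 0 := by
    intro h0
    apply hα_ne
    rw [hαdef, h0, dotProduct_zero]
  -- the rank-one candidate
  set Vt : Matrix (Fin M) (Fin M) ℂ := ((r⁻¹ : ℝ) : ℂ) • vecMulVec v (star v) with hVtdef
  have hVt_psd : Vt.PosSemidef := psd_smul_vecMulVec r⁻¹ (inv_nonneg.mpr hrpos.le) v
  have hW_dot : ∀ x : Fin M → ℂ,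
      star x ⬝ᵥ Vt *ᵥ x = (((r⁻¹ * Complex.normSq (star x ⬝ᵥ v) : ℝ)) : ℂ) := by
    intro x
    rw [hVtdef, smul_mulVec, dotProduct_smul, smul_eq_mul, dot_vecMulVec,
      star_dotProduct v x, Complex.star_def, Complex.mul_conj]
    push_cast
    ring
  have hVt_hh : star h ⬝ᵥ Vt *ᵥ h = α := by
    rw [hW_dot h, ← hαdef, hαr]
    rw [show Complex.normSq ((r : ℂ)) = r ^ 2 by
      rw [Complex.normSq_ofReal]; exact (sq r).symm]
    rw [show r⁻¹ * r ^ 2 = r by rw [sq, ← mul_assoc, inv_mul_cancel₀ hrpos.ne', one_mul]]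
  set D : Matrix (Fin M) (Fin M) ℂ := A - Vt with hDdef
  -- Cauchy-Schwarz
  obtain ⟨B, hB⟩ := posSemidef_eq_conjTranspose_mul_self' (hVpsd k)
  have hABdot : ∀ x y : Fin M → ℂ, star x ⬝ᵥ A *ᵥ y = star (B *ᵥ x) ⬝ᵥ (B *ᵥ y) := by
    intro x y
    rw [hAdef, hB, dot_factor]
  have hCS : ∀ x : Fin M → ℂ,
      Complex.normSq (star x ⬝ᵥ v) ≤ (star x ⬝ᵥ A *ᵥ x).re * r := by
    intro x
    have h1 : star x ⬝ᵥ v = star (B *ᵥ x) ⬝ᵥ (B *ᵥ h) := by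
      rw [hvdef, hABdot x h]
    have h2 := cs_dot (B *ᵥ x) (B *ᵥ h)
    rw [← hABdot x x, ← hABdot h h, ← hvdef, ← hαdef, ← hrdef, ← h1] at h2
    exact h2
  have hD_psd : D.PosSemidef := by
    refine PosSemidef.of_dotProduct_mulVec_nonneg ?_ ?_
    · exact (hVpsd k).1.sub hVt_psd.1
    · intro x
      have hsplit : star x ⬝ᵥ D *ᵥ x
          = star x ⬝ᵥ A *ᵥ x - (((r⁻¹ * Complex.normSq (star x ⬝ᵥ v) : ℝ)) : ℂ) := by
        rw [hDdef, sub_mulVec, dotProduct_sub, hW_dot x]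
      rw [hsplit, complex_nonneg_iff]
      have hq := hdotpsd A (hVpsd k) x
      constructor
      · rw [Complex.sub_re, Complex.ofReal_re]
        have := hCS x
        have h3 : r⁻¹ * Complex.normSq (star x ⬝ᵥ v) ≤ (star x ⬝ᵥ A *ᵥ x).re := by
          rw [inv_mul_le_iff₀ hrpos, mul_comm]
          exact this
        linarith
      · rw [Complex.sub_im, Complex.ofReal_im, hq.2]
        ring
  have hD_dot : ∀ x : Fin M → ℂ, 0 ≤ (star x ⬝ᵥ D *ᵥ x).re ∧ (star x ⬝ᵥ D *ᵥ x).im = 0 :=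
    hdotpsd D hD_psd
  have hDhh : star h ⬝ᵥ D *ᵥ h = 0 := by
    rw [hDdef, sub_mulVec, dotProduct_sub, hVt_hh, ← hvdef, ← hαdef, sub_self]
  -- the modified solution
  set V' : Fin K → Matrix (Fin M) (Fin M) ℂ := Function.update Vstar k Vt with hV'def
  have hsum' : ∑ j, V' j = (∑ j, Vstar j) - D := by
    rw [hV'def, Finset.sum_update_of_mem (Finset.mem_univ k),
      Finset.sum_eq_add_sum_sdiff_singleton_of_mem (Finset.mem_univ k) Vstar, hDdef, ← hAdef]
    abel
  have hsum_mm : ∀ s t : Fin M, ∑ j, V' j s t = (∑ j, Vstar j s t) - D s t := by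
    intro s t
    have h1 := congrFun (congrFun hsum' s) t
    simpa [Matrix.sum_apply, Matrix.sub_apply] using h1
  have hVt_eq : Vt = A - D := by
    rw [hDdef]; abel
  have hfeas' : SDRFeasible hvec σ γbar Cbar Pbar V' Qstar := by
    refine ⟨?_, hQpsd, ?_, ?_, ?_⟩
    · intro j
      rcases eq_or_ne j k with rfl | hne
      · rw [hV'def, Function.update_self]; exact hVt_psd
      · rw [hV'def, Function.update_of_ne hne]; exact hVpsd j
    · intro j
      rcases eq_or_ne j k with rfl | hne
      · have hmat : ((1 + 1 / γbar j : ℝ) : ℂ) • V' j - (∑ i, V' i) - Qstar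
            = (((1 + 1 / γbar j : ℝ) : ℂ) • Vstar j - (∑ i, Vstar i) - Qstar)
              + ((1 : ℂ) - ((1 + 1 / γbar j : ℝ) : ℂ)) • D := by
          rw [hV'def, Function.update_self, hsum', hVt_eq, ← hAdef]
          module
        rw [hmat, add_mulVec, dotProduct_add, smul_mulVec, dotProduct_smul, ← hhdef,
          hDhh, smul_zero, add_zero]
        exact hSINR j
      · have hmat : ((1 + 1 / γbar j : ℝ) : ℂ) • V' j - (∑ i, V' i) - Qstar
            = (((1 + 1 / γbar j : ℝ) : ℂ) • Vstar j - (∑ i, Vstar i) - Qstar) + D := by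
          rw [hV'def, Function.update_of_ne hne, hsum']
          module
        rw [hmat, add_mulVec, dotProduct_add, Complex.add_re]
        have h2 := (hD_dot (hvec j)).1
        linarith [hSINR j]
    · intro m
      have hd0 : 0 ≤ D m m := psd_diag_nonneg hD_psd m
      set d : ℝ := (D m m).re with hddef
      have hdnn : 0 ≤ d := (complex_nonneg_iff.mp hd0).1
      have hdre : D m m = (d : ℂ) := by
        apply Complex.ext
        · simp [hddef]
        · simp [(complex_nonneg_iff.mp hd0).2]
      set t : ℝ := (2 : ℝ) ^ (-(Cbar m)) with htdef
      have htnn : 0 ≤ t := by positivity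
      have hEm : Bmat Cbar V' Qstar m
          = Bmat Cbar Vstar Qstar m
            + ((t * d : ℝ) : ℂ) • vecMulVec (Pi.single m (1 : ℂ)) (star (Pi.single m 1)) := by
        funext s u
        have hsd := hsum_mm m m
        rw [star_single_one]
        by_cases hsu : s = m ∧ u = m
        · obtain ⟨rfl, rfl⟩ := hsu
          simp only [Bmat, Matrix.add_apply, Matrix.smul_apply,
            vecMulVec_apply, Pi.single_eq_same, mul_one, smul_eq_mul,
            eq_self_iff_true, and_self, if_true]
          rw [hsd, hdre]
          push_cast
          ring
        · have hz : vecMulVec (Pi.single m (1 : ℂ)) (Pi.single m 1) s u = 0 := by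
            rw [vecMulVec_apply]
            rcases not_and_or.mp hsu with hs | hu
            · rw [Pi.single_eq_of_ne hs, zero_mul]
            · rw [Pi.single_eq_of_ne hu, mul_zero]
          simp only [Bmat, if_neg hsu, Matrix.add_apply, Matrix.smul_apply, hz,
            smul_eq_mul, mul_zero, add_zero]
      rw [hEm]
      exact (hBm m).add (psd_smul_vecMulVec (t * d) (mul_nonneg htnn hdnn) _)
    · intro m
      have h1 := hsum_mm m m
      have hd0 : 0 ≤ D m m := psd_diag_nonneg hD_psd m
      have hdnn : 0 ≤ (D m m).re := (complex_nonneg_iff.mp hd0).1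
      rw [h1, Complex.sub_re]
      linarith [hPow m]
  -- optimality forces trace D = 0
  have hle := hopt V' Qstar hfeas'
  have htr : ∑ j, (V' j).trace = (∑ j, (Vstar j).trace) - D.trace := by
    have h1 := congrArg Matrix.trace hsum'
    rwa [trace_sum, trace_sub, trace_sum] at h1
  have hobj : SDRObj V' Qstar = SDRObj Vstar Qstar - D.trace.re := by
    unfold SDRObj
    rw [htr, Complex.sub_re]
    ring
  have htr_nonneg : 0 ≤ D.trace.re := by
    rw [Matrix.trace, Complex.re_sum]
    exact Finset.sum_nonneg fun i _ =>
      (complex_nonneg_iff.mp (psd_diag_nonneg hD_psd i)).1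
  have htr_re0 : D.trace.re = 0 := by
    rw [hobj] at hle
    linarith
  have htr_im0 : D.trace.im = 0 := by
    rw [Matrix.trace, Complex.im_sum]
    exact Finset.sum_eq_zero fun i _ =>
      (complex_nonneg_iff.mp (psd_diag_nonneg hD_psd i)).2
  have hD0 : D = 0 := psd_trace_eq_zero hD_psd (Complex.ext htr_re0 htr_im0)
  have hA_eq : A = Vt := sub_eq_zero.mp (hDdef ▸ hD0)
  -- compute the rank
  have hrange : LinearMap.range (Vstar k).mulVecLin = (ℂ ∙ v) := by
    apply le_antisymm
    · rintro y ⟨x, rfl⟩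
      rw [Matrix.mulVecLin_apply, ← hAdef, hA_eq, hVtdef, smul_mulVec,
        vecMulVec_mulVec']
      exact Submodule.mem_span_singleton.mpr
        ⟨((r⁻¹ : ℝ) : ℂ) * (star v ⬝ᵥ x), by rw [← smul_smul]⟩
    · rw [Submodule.span_singleton_le_iff_mem]
      exact ⟨h, by rw [Matrix.mulVecLin_apply, ← hAdef, ← hvdef]⟩
  rw [Matrix.rank, hrange]
  exact finrank_span_singleton hv_ne

end
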